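/- Covering decomposition lemma: Let G=(V,E) have edge capacities c and edge lengths l with induced distance d, F = Σ_e c(e)·l(e), and suppose S⊆V with |S|≤r satisfies d(u,S)≤1/4 for all u∈V. Then there exists a set E'⊆E with c(E') ≤ 8·ln(r+1)·F such that every connected component of (V, E∖E') has d-diameter strictly less than 1. -/

import Mathlib

open scoped ENNReal

/-- Length of a walk with respect to edge lengths `l`. -/
noncomputable def walkLen {V : Type*} {G : SimpleGraph V} (l : Sym2 V → NNReal)
    {u v : V} (p : G.Walk u v) : ℝ≥0∞ :=
  (p.edges.map fun e => (l e : ℝ≥0∞)).sum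

/-- Shortest-path distance in `G` with edge lengths `l` (`∞` if disconnected). -/
noncomputable def wdist {V : Type*} (G : SimpleGraph V) (l : Sym2 V → NNReal)
    (u v : V) : ℝ≥0∞ :=
  ⨅ p : G.Walk u v, walkLen l p

open Finset

section API
variable {V : Type*} {G : SimpleGraph V} (l : Sym2 V → NNReal)

lemma walkLen_append {u v w : V} (p : G.Walk u v) (q : G.Walk v w) :
    walkLen l (p.append q) = walkLen l p + walkLen l q := by
  simp [walkLen]

lemma walkLen_reverse {u v : V} (p : G.Walk u v) :
    walkLen l p.reverse = walkLen l p := by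
  simp [walkLen, List.sum_reverse]

lemma wdist_le {u v : V} (p : G.Walk u v) : wdist G l u v ≤ walkLen l p :=
  iInf_le _ _

lemma wdist_self (u : V) : wdist G l u u = 0 :=
  le_antisymm (by simpa [walkLen] using wdist_le l (SimpleGraph.Walk.nil : G.Walk u u))
    (zero_le)

lemma wdist_comm (u v : V) : wdist G l u v = wdist G l v u := by
  have h : ∀ a b : V, wdist G l a b ≤ wdist G l b a := by
    intro a b
    refine le_iInf fun p => ?_
    simpa [walkLen_reverse] using wdist_le l p.reverse
  exact le_antisymm (h u v) (h v u)

lemma wdist_triangle (u v w : V) : wdist G l u w ≤ wdist G l u v + wdist G l v w := by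
  rw [wdist, wdist, wdist, ENNReal.iInf_add]
  refine le_iInf fun p => ?_
  rw [ENNReal.add_iInf]
  refine le_iInf fun q => ?_
  exact (wdist_le l (p.append q)).trans_eq (walkLen_append l p q)

lemma wdist_le_edge {x y : V} (h : G.Adj x y) : wdist G l x y ≤ (l s(x, y) : ℝ≥0∞) := by
  simpa [walkLen] using wdist_le l (SimpleGraph.Walk.cons h SimpleGraph.Walk.nil)

lemma wdist_edge_step {s x y : V} (h : G.Adj x y) :
    wdist G l s y ≤ wdist G l s x + (l s(x, y) : ℝ≥0∞) :=
  le_trans (wdist_triangle l s x y) (add_le_add le_rfl (wdist_le_edge l h))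

end API

noncomputable def sym2min {V : Type*} (f : V → ℝ≥0∞) : Sym2 V → ℝ≥0∞ :=
  Sym2.lift ⟨fun x y => min (f x) (f y), fun _ _ => min_comm _ _⟩

noncomputable def sym2max {V : Type*} (f : V → ℝ≥0∞) : Sym2 V → ℝ≥0∞ :=
  Sym2.lift ⟨fun x y => max (f x) (f y), fun _ _ => max_comm _ _⟩

@[simp] lemma sym2min_mk {V : Type*} (f : V → ℝ≥0∞) (x y : V) :
    sym2min f s(x, y) = min (f x) (f y) := rfl

@[simp] lemma sym2max_mk {V : Type*} (f : V → ℝ≥0∞) (x y : V) :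
    sym2max f s(x, y) = max (f x) (f y) := rfl

lemma quarter_eq : (1/4 : ℝ≥0∞) = ENNReal.ofReal (1/4) := by
  rw [ENNReal.ofReal_div_of_pos (by norm_num), ENNReal.ofReal_one, ENNReal.ofReal_ofNat]
noncomputable def phiR (m le ρ : ℝ) : ℝ := min (max (ρ - m) 0) le

lemma phiR_nonneg {m le ρ : ℝ} (hle : 0 ≤ le) : 0 ≤ phiR m le ρ :=
  le_min (le_max_right _ _) hle

lemma phiR_le {m le ρ : ℝ} : phiR m le ρ ≤ le := min_le_right _ _

lemma phiR_mono {m le ρ ρ' : ℝ} (h : ρ ≤ ρ') : phiR m le ρ ≤ phiR m le ρ' :=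
  min_le_min (max_le_max (by linarith) le_rfl) le_rfl

lemma phiR_lip {m le ρ ρ' : ℝ} (h : ρ ≤ ρ') : phiR m le ρ' ≤ phiR m le ρ + (ρ' - ρ) := by
  simp only [phiR, min_def, max_def]
  split_ifs <;> linarith

lemma phiR_cut {m le ρ ρ' M : ℝ} (hm : m ≤ ρ) (hρρ' : ρ ≤ ρ') (hρ'M : ρ' ≤ M)
    (hM : M ≤ m + le) : phiR m le ρ' = phiR m le ρ + (ρ' - ρ) := by
  simp only [phiR, min_def, max_def]
  split_ifs <;> linarith

lemma core {α : Type*} [DecidableEq α] (A : Finset α) (c le m M : α → ℝ)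
    (hc : ∀ e ∈ A, 0 ≤ c e) (hle : ∀ e ∈ A, 0 ≤ le e)
    (hM : ∀ e ∈ A, M e ≤ m e + le e)
    (V0 lam : ℝ) (hV0 : 0 < V0) (hlam : 0 < lam)
    (hcap : ∑ e ∈ A, c e * le e ≤ (Real.exp (lam / 4) - 1) * V0) :
    ∃ ρ : ℝ, 1/4 ≤ ρ ∧ ρ < 1/2 ∧
      ∑ e ∈ A.filter (fun e => m e ≤ ρ ∧ ρ < M e), c e
        ≤ lam * (V0 + ∑ e ∈ A, c e * phiR (m e) (le e) ρ) := by
  by_contra hcon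
  push_neg at hcon
  set vol : ℝ → ℝ := fun ρ => V0 + ∑ e ∈ A, c e * phiR (m e) (le e) ρ with hvol
  set cut : ℝ → ℝ := fun ρ => ∑ e ∈ A.filter (fun e => m e ≤ ρ ∧ ρ < M e), c e with hcut
  set Ctot : ℝ := ∑ e ∈ A, c e with hCtot
  have hCtot0 : 0 ≤ Ctot := Finset.sum_nonneg hc
  set T : Finset ℝ := insert (1/4) (insert (1/2) (A.image m ∪ A.image M)) with hT
  have hT14 : (1/4 : ℝ) ∈ T := Finset.mem_insert_self _ _
  have hT12 : (1/2 : ℝ) ∈ T := Finset.mem_insert_of_mem (Finset.mem_insert_self _ _)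
  have hTm : ∀ e ∈ A, m e ∈ T :=
    fun e he => Finset.mem_insert_of_mem (Finset.mem_insert_of_mem
      (Finset.mem_union_left _ (Finset.mem_image_of_mem m he)))
  have hTM : ∀ e ∈ A, M e ∈ T :=
    fun e he => Finset.mem_insert_of_mem (Finset.mem_insert_of_mem
      (Finset.mem_union_right _ (Finset.mem_image_of_mem M he)))
  have hvolV0 : ∀ ρ, V0 ≤ vol ρ := by
    intro ρ
    have : (0:ℝ) ≤ ∑ e ∈ A, c e * phiR (m e) (le e) ρ :=
      Finset.sum_nonneg fun e he => mul_nonneg (hc e he) (phiR_nonneg (hle e he))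
    simp only [hvol]; linarith
  have hvolpos : ∀ ρ, 0 < vol ρ := fun ρ => lt_of_lt_of_le hV0 (hvolV0 ρ)
  have hvolmono : ∀ {ρ ρ'}, ρ ≤ ρ' → vol ρ ≤ vol ρ' := by
    intro ρ ρ' h
    simp only [hvol]
    have hss : ∑ e ∈ A, c e * phiR (m e) (le e) ρ ≤ ∑ e ∈ A, c e * phiR (m e) (le e) ρ' :=
      Finset.sum_le_sum (fun e he => mul_le_mul_of_nonneg_left (phiR_mono h) (hc e he))
    linarith
  have hvollip : ∀ {ρ ρ'}, ρ ≤ ρ' → vol ρ' ≤ vol ρ + (ρ' - ρ) * Ctot := by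
    intro ρ ρ' h
    have h1 : ∀ e ∈ A, c e * phiR (m e) (le e) ρ' ≤ c e * phiR (m e) (le e) ρ + c e * (ρ' - ρ) := by
      intro e he
      have := mul_le_mul_of_nonneg_left (phiR_lip (m := m e) (le := le e) h) (hc e he)
      linarith [this, mul_add (c e) (phiR (m e) (le e) ρ) (ρ' - ρ)]
    have h2 := Finset.sum_le_sum h1
    rw [Finset.sum_add_distrib] at h2
    have h3 : ∑ e ∈ A, c e * (ρ' - ρ) = (ρ' - ρ) * Ctot := by
      rw [hCtot, Finset.mul_sum]; exact Finset.sum_congr rfl fun e _ => mul_comm _ _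
    simp only [hvol]; linarith
  -- per-step lemma
  have step : ∀ t' ∈ T, 1/4 < t' → t' ≤ 1/2 →
      ∃ p ∈ T, 1/4 ≤ p ∧ p < t' ∧ vol p * Real.exp (lam * (t' - p)) < vol t' := by
    intro t' ht'T ht'14 ht'12
    have hne : (T.filter (· < t')).Nonempty := ⟨1/4, Finset.mem_filter.mpr ⟨hT14, ht'14⟩⟩
    set p := (T.filter (· < t')).max' hne with hp
    have hpmem : p ∈ T.filter (· < t') := Finset.max'_mem _ hne
    have hpT : p ∈ T := (Finset.mem_filter.mp hpmem).1
    have hpt' : p < t' := by simpa using (Finset.mem_filter.mp hpmem).2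
    have hp14 : 1/4 ≤ p := by
      rw [hp]; exact Finset.le_max' (T.filter (· < t')) (1/4) (Finset.mem_filter.mpr ⟨hT14, ht'14⟩)
    have hgap : ∀ x ∈ T, ¬(p < x ∧ x < t') := by
      rintro x hx ⟨h1, h2⟩
      have hle' := Finset.le_max' (T.filter (· < t')) x (Finset.mem_filter.mpr ⟨hx, h2⟩)
      rw [← hp] at hle'
      exact absurd hle' (not_le.mpr h1)
    refine ⟨p, hpT, hp14, hpt', ?_⟩
    -- cut constancy on [p, t')
    have hcutconst : ∀ ρ, p ≤ ρ → ρ < t' → cut ρ = cut p := by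
      intro ρ hρ1 hρ2
      have hfe : A.filter (fun e => m e ≤ ρ ∧ ρ < M e) = A.filter (fun e => m e ≤ p ∧ p < M e) := by
        apply Finset.filter_congr
        intro e he
        constructor
        · rintro ⟨h1, h2⟩
          have hmp : m e ≤ p := by
            by_contra hco
            exact hgap (m e) (hTm e he) ⟨not_le.mp hco, lt_of_le_of_lt h1 hρ2⟩
          exact ⟨hmp, lt_of_le_of_lt hρ1 h2⟩
        · rintro ⟨h1, h2⟩
          have hMt' : t' ≤ M e := by
            by_contra hco
            exact hgap (M e) (hTM e he) ⟨h2, not_le.mp hco⟩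
          exact ⟨le_trans h1 hρ1, lt_of_lt_of_le hρ2 hMt'⟩
      simp only [hcut]
      rw [hfe]
    -- growth inequality G1
    have hG1 : vol p + (t' - p) * cut p ≤ vol t' := by
      have h1 : ∀ e ∈ A,
          c e * phiR (m e) (le e) p + (if m e ≤ p ∧ p < M e then c e * (t' - p) else 0)
            ≤ c e * phiR (m e) (le e) t' := by
        intro e he
        split_ifs with hcond
        · have hMt' : t' ≤ M e := by
            by_contra hco
            exact hgap (M e) (hTM e he) ⟨hcond.2, not_le.mp hco⟩
          have hpc : phiR (m e) (le e) t' = phiR (m e) (le e) p + (t' - p) :=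
            phiR_cut hcond.1 (le_of_lt hpt') hMt' (hM e he)
          rw [hpc, mul_add]
        · have hpm : c e * phiR (m e) (le e) p ≤ c e * phiR (m e) (le e) t' :=
            mul_le_mul_of_nonneg_left (phiR_mono (le_of_lt hpt')) (hc e he)
          linarith
      have h2 := Finset.sum_le_sum h1
      rw [Finset.sum_add_distrib, ← Finset.sum_filter] at h2
      have h3 : ∑ e ∈ A.filter (fun e => m e ≤ p ∧ p < M e), c e * (t' - p)
          = (t' - p) * cut p := by
        rw [hcut, Finset.mul_sum]
        exact Finset.sum_congr rfl fun e _ => mul_comm _ _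
      simp only [hvol]
      rw [h3] at h2
      linarith
    -- S1 : lam * vol t' ≤ cut p
    have hS1 : lam * vol t' ≤ cut p := by
      by_contra hS
      push_neg at hS
      set ε := lam * vol t' - cut p with hε
      have hεpos : 0 < ε := by simp only [hε]; linarith
      set δ := min ((t' - p)/2) (ε / (lam * Ctot + 1)) with hδ
      have hden : 0 < lam * Ctot + 1 := by positivity
      have hδpos : 0 < δ := lt_min (by linarith) (div_pos hεpos hden)
      have hδle : δ * (lam * Ctot + 1) ≤ ε := by
        have : δ ≤ ε / (lam * Ctot + 1) := min_le_right _ _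
        calc δ * (lam * Ctot + 1) ≤ (ε / (lam * Ctot + 1)) * (lam * Ctot + 1) := by
              apply mul_le_mul_of_nonneg_right this (le_of_lt hden)
          _ = ε := by field_simp
      set ρ := t' - δ with hρ
      have hρp : p ≤ ρ := by
        have : δ ≤ (t' - p)/2 := min_le_left _ _
        simp only [hρ]; linarith
      have hρt' : ρ < t' := by simp only [hρ]; linarith
      have h14 : 1/4 ≤ ρ := le_trans hp14 hρp
      have h12 : ρ < 1/2 := lt_of_lt_of_le hρt' ht'12
      have hmain := hcon ρ h14 h12
      -- hcon : lam * vol ρ < cut ρ ... check direction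
      have hcc : cut ρ = cut p := hcutconst ρ hρp hρt'
      have hlipp : vol t' ≤ vol ρ + δ * Ctot := by
        have := hvollip (le_of_lt hρt')
        have hd : t' - ρ = δ := by simp only [hρ]; ring
        rw [hd] at this; exact this
      have hmul : lam * vol t' ≤ lam * vol ρ + lam * (δ * Ctot) := by
        calc lam * vol t' ≤ lam * (vol ρ + δ * Ctot) :=
              mul_le_mul_of_nonneg_left hlipp (le_of_lt hlam)
          _ = lam * vol ρ + lam * (δ * Ctot) := by ring
      have hmain' : lam * vol ρ < cut p := by rw [← hcc]; exact hmain
      have hexp : lam * (δ * Ctot) ≤ ε - δ := by nlinarith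
      clear_value vol cut Ctot T
      linarith [hmul, hexp, hmain', hδpos, hε]
    -- combine: vol t' ≥ vol p + (t'-p) * lam * vol t'
    set Δ := t' - p with hΔ
    have hΔpos : 0 < Δ := by simp only [hΔ]; linarith
    have hcomb : vol p + Δ * (lam * vol t') ≤ vol t' := by
      have := mul_le_mul_of_nonneg_left hS1 (le_of_lt hΔpos)
      linarith [hG1]
    have hvpt : 0 < vol p := hvolpos p
    have hvt : 0 < vol t' := hvolpos t'
    have ha1 : lam * Δ < 1 := by nlinarith
    have ha0 : 0 < lam * Δ := mul_pos hlam hΔpos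
    have hfact : (1 - lam * Δ) * vol t' ≥ vol p := by nlinarith
    have hexplt : (1 - lam * Δ) * Real.exp (lam * Δ) < 1 := by
      have h1 : 1 - lam * Δ < Real.exp (-(lam * Δ)) := by
        have := Real.add_one_lt_exp (x := -(lam * Δ)) (by linarith [ha0])
        linarith
      have h2 : (0:ℝ) < Real.exp (lam * Δ) := Real.exp_pos _
      calc (1 - lam * Δ) * Real.exp (lam * Δ)
          < Real.exp (-(lam * Δ)) * Real.exp (lam * Δ) := by
            apply mul_lt_mul_of_pos_right h1 h2
        _ = 1 := by rw [← Real.exp_add]; simp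
      done
    calc vol p * Real.exp (lam * Δ) ≤ ((1 - lam * Δ) * vol t') * Real.exp (lam * Δ) := by
          apply mul_le_mul_of_nonneg_right hfact (le_of_lt (Real.exp_pos _))
      _ = ((1 - lam * Δ) * Real.exp (lam * Δ)) * vol t' := by ring
      _ < 1 * vol t' := by apply mul_lt_mul_of_pos_right hexplt hvt
      _ = vol t' := one_mul _
  -- chain by strong induction
  have chain : ∀ n : ℕ, ∀ t' ∈ T, 1/4 < t' → t' ≤ 1/2 → (T.filter (· < t')).card = n →
      V0 * Real.exp (lam * (t' - 1/4)) < vol t' := by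
    intro n
    induction n using Nat.strong_induction_on with
    | _ n ih =>
      intro t' ht'T h14 h12 hcard
      obtain ⟨p, hpT, hp14, hpt', hstep⟩ := step t' ht'T h14 h12
      rcases eq_or_lt_of_le hp14 with heq | hlt
      · subst heq
        have h1 : V0 * Real.exp (lam * (t' - 1/4)) ≤ vol (1/4) * Real.exp (lam * (t' - 1/4)) :=
          mul_le_mul_of_nonneg_right (hvolV0 (1/4)) (le_of_lt (Real.exp_pos _))
        exact lt_of_le_of_lt h1 hstep
      · have hpfilter : p ∈ T.filter (· < t') := Finset.mem_filter.mpr ⟨hpT, hpt'⟩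
        have hsubset : T.filter (· < p) ⊆ T.filter (· < t') := by
          intro x hx
          rw [Finset.mem_filter] at hx ⊢
          exact ⟨hx.1, lt_trans hx.2 hpt'⟩
        have hsub : T.filter (· < p) ⊂ T.filter (· < t') :=
          (Finset.ssubset_iff_of_subset hsubset).mpr
            ⟨p, hpfilter, fun hcmem => lt_irrefl p (Finset.mem_filter.mp hcmem).2⟩
        have hcardlt : (T.filter (· < p)).card < n := by
          rw [← hcard]; exact Finset.card_lt_card hsub
        have hIH := ih _ hcardlt p hpT hlt (le_of_lt (lt_of_lt_of_le hpt' h12)) rfl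
        have hexp2 : (0:ℝ) < Real.exp (lam * (t' - p)) := Real.exp_pos _
        have h2 : V0 * Real.exp (lam * (p - 1/4)) * Real.exp (lam * (t' - p))
            < vol p * Real.exp (lam * (t' - p)) :=
          mul_lt_mul_of_pos_right hIH hexp2
        have h3 : V0 * Real.exp (lam * (p - 1/4)) * Real.exp (lam * (t' - p))
            = V0 * Real.exp (lam * (t' - 1/4)) := by
          rw [mul_assoc, ← Real.exp_add]
          ring_nf
        exact lt_of_lt_of_le (h3 ▸ h2) (le_of_lt hstep)
  have hfin := chain _ (1/2) hT12 (by norm_num) le_rfl rfl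
  have hub : vol (1/2) ≤ V0 + (Real.exp (lam / 4) - 1) * V0 := by
    have h1 : ∑ e ∈ A, c e * phiR (m e) (le e) (1/2) ≤ ∑ e ∈ A, c e * le e :=
      Finset.sum_le_sum fun e he => mul_le_mul_of_nonneg_left phiR_le (hc e he)
    simp only [hvol]
    linarith
  have heq : lam * (1/2 - 1/4) = lam / 4 := by ring
  rw [heq] at hfin
  nlinarith [hfin, hub]

open scoped Classical in
lemma aux {V : Type*} [Fintype V] [DecidableEq V]
    (G : SimpleGraph V) [DecidableRel G.Adj]
    (c l : Sym2 V → NNReal) (V0 lam : ℝ) (hV0 : 0 < V0) (hlam : 0 < lam)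
    (hF : ∑ e ∈ G.edgeFinset, ((c e : ℝ) * l e) ≤ (Real.exp (lam / 4) - 1) * V0) :
    ∀ (L : List V) (W : Finset V),
      ∃ (E' : Finset (Sym2 V)) (Rs : List (Finset V)),
        E' ⊆ G.edgeFinset ∧
        (∀ R ∈ Rs, R ⊆ W) ∧
        (∑ e ∈ E', (c e : ℝ)) ≤ lam * (L.length * V0 +
            ∑ e ∈ G.edgeFinset.filter (fun e => ∀ v ∈ e, v ∈ W), ((c e : ℝ) * l e)) ∧
        (∀ R ∈ Rs, ∀ u ∈ R, ∀ v ∈ R, wdist G l u v < 1) ∧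
        (∀ u ∈ W, (∃ s ∈ L, wdist G l s u ≤ 1/4) → ∃ R ∈ Rs, u ∈ R) ∧
        (∀ R ∈ Rs, ∀ x ∈ R, ∀ y ∈ W, G.Adj x y → s(x, y) ∉ E' → y ∈ R) := by
  intro L
  induction L with
  | nil =>
      intro W
      refine ⟨∅, [], by simp, by simp, ?_, by simp, by simp, by simp⟩
      simp only [Finset.sum_empty, List.length_nil, Nat.cast_zero, zero_mul, zero_add]
      have h0 : (0:ℝ) ≤ ∑ e ∈ G.edgeFinset.filter (fun e => ∀ v ∈ e, v ∈ W), ((c e : ℝ) * l e) :=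
        Finset.sum_nonneg fun e _ => mul_nonneg (c e).coe_nonneg (l e).coe_nonneg
      positivity
  | cons s L ih =>
      intro W
      set D : V → ℝ≥0∞ := wdist G l s with hD
      set A : Finset (Sym2 V) := G.edgeFinset.filter (fun e => ∀ v ∈ e, v ∈ W) with hA
      set A' : Finset (Sym2 V) := A.filter (fun e => sym2min D e ≠ ⊤) with hA'
      have hA'sub : A' ⊆ A := Finset.filter_subset _ _
      have hAsub : A ⊆ G.edgeFinset := Finset.filter_subset _ _
      -- basic facts about edges of A'
      have hedge_bound : ∀ e ∈ A', sym2max D e ≤ sym2min D e + (l e : ℝ≥0∞) := by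
        intro e he
        have hmem : e ∈ G.edgeFinset := hAsub (hA'sub he)
        induction e with
        | _ x y =>
          have hadj : G.Adj x y := by rwa [SimpleGraph.mem_edgeFinset, SimpleGraph.mem_edgeSet] at hmem
          have h1 : D y ≤ D x + (l s(x, y) : ℝ≥0∞) := wdist_edge_step l hadj
          have h2 : D x ≤ D y + (l s(x, y) : ℝ≥0∞) := by
            have := wdist_edge_step l hadj.symm (s := s)
            rwa [Sym2.eq_swap] at this
          simp only [sym2min_mk, sym2max_mk]
          rcases le_total (D x) (D y) with h | h
          · rw [min_eq_left h, max_eq_right h]; exact h1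
          · rw [min_eq_right h, max_eq_left h]; exact h2
      have hmax_ne_top : ∀ e ∈ A', sym2max D e ≠ ⊤ := by
        intro e he
        have h1 := hedge_bound e he
        have h2 : sym2min D e ≠ ⊤ := (Finset.mem_filter.mp he).2
        exact ne_top_of_le_ne_top (by simp [h2, ENNReal.add_ne_top]) h1
      -- apply the core lemma
      obtain ⟨ρ, hρ14, hρ12, hcut⟩ :=
        core A' (fun e => (c e : ℝ)) (fun e => (l e : ℝ))
          (fun e => (sym2min D e).toReal) (fun e => (sym2max D e).toReal)
          (fun e _ => (c e).coe_nonneg) (fun e _ => (l e).coe_nonneg)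
          (by
            intro e he
            have h1 := hedge_bound e he
            have h2 : sym2min D e ≠ ⊤ := (Finset.mem_filter.mp he).2
            have h3 : sym2min D e + (l e : ℝ≥0∞) ≠ ⊤ := by simp [h2, ENNReal.add_ne_top]
            have := ENNReal.toReal_mono h3 h1
            rwa [ENNReal.toReal_add h2 (by simp), ENNReal.coe_toReal] at this)
          V0 lam hV0 hlam
          (le_trans (Finset.sum_le_sum_of_subset_of_nonneg (hA'sub.trans hAsub)
            (fun e _ _ => mul_nonneg (c e).coe_nonneg (l e).coe_nonneg)) hF)
      have hρ0 : (0:ℝ) ≤ ρ := le_trans (by norm_num) hρ14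
      set R : Finset V := W.filter (fun u => D u ≤ ENNReal.ofReal ρ) with hR
      set C : Finset (Sym2 V) :=
        A'.filter (fun e => (sym2min D e).toReal ≤ ρ ∧ ρ < (sym2max D e).toReal) with hC
      obtain ⟨E'', Rs'', hsub'', hRsub'', hcap'', hdiam'', hcov'', hsep''⟩ := ih (W \ R)
      refine ⟨C ∪ E'', R :: Rs'', ?_, ?_, ?_, ?_, ?_, ?_⟩
      · exact Finset.union_subset ((Finset.filter_subset _ _).trans (hA'sub.trans hAsub)) hsub''
      · -- regions inside W
        intro R0 hR0
        rcases List.mem_cons.mp hR0 with h | h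
        · subst h; exact Finset.filter_subset _ _
        · exact (hRsub'' R0 h).trans (Finset.sdiff_subset)
      · -- capacity bound
        have hsum_union : ∑ e ∈ C ∪ E'', (c e : ℝ) ≤ ∑ e ∈ C, (c e : ℝ) + ∑ e ∈ E'', (c e : ℝ) := by
          have h1 : ∑ e ∈ C ∪ E'', (c e : ℝ) = ∑ e ∈ C, (c e : ℝ) + ∑ e ∈ E'' \ C, (c e : ℝ) := by
            rw [← Finset.sum_union (Finset.disjoint_sdiff)]
            congr 1
            rw [Finset.union_sdiff_self_eq_union]
          rw [h1]
          have h2 : ∑ e ∈ E'' \ C, (c e : ℝ) ≤ ∑ e ∈ E'', (c e : ℝ) :=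
            Finset.sum_le_sum_of_subset_of_nonneg (Finset.sdiff_subset)
              (fun e _ _ => (c e).coe_nonneg)
          linarith
        -- volume removed bound
        set AW' : Finset (Sym2 V) := G.edgeFinset.filter (fun e => ∀ v ∈ e, v ∈ W \ R) with hAW'
        have hAW'A : AW' ⊆ A := by
          intro e he
          rw [Finset.mem_filter] at he ⊢
          exact ⟨he.1, fun v hv => (Finset.mem_sdiff.mp (he.2 v hv)).1⟩
        have hvolrem : ∑ e ∈ A', (c e : ℝ) * phiR (sym2min D e).toReal ((l e : ℝ)) ρ
            ≤ ∑ e ∈ A \ AW', ((c e : ℝ) * l e) := by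
          have hsupp : ∀ e ∈ A',
              (c e : ℝ) * phiR (sym2min D e).toReal ((l e : ℝ)) ρ ≠ 0 → e ∈ A \ AW' := by
            intro e he hne
            have hphi : phiR (sym2min D e).toReal ((l e : ℝ)) ρ ≠ 0 := by
              intro h0; rw [h0, mul_zero] at hne; exact hne rfl
            have hmlt : (sym2min D e).toReal < ρ := by
              by_contra hco
              push_neg at hco
              have : phiR (sym2min D e).toReal ((l e : ℝ)) ρ = 0 := by
                simp only [phiR]
                rw [max_eq_right (by linarith), min_eq_left (l e).coe_nonneg]
              exact hphi this
            have hmtop : sym2min D e ≠ ⊤ := (Finset.mem_filter.mp he).2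
            have hmlt2 : sym2min D e < ENNReal.ofReal ρ :=
              (ENNReal.lt_ofReal_iff_toReal_lt hmtop).mpr hmlt
            rw [Finset.mem_sdiff]
            refine ⟨hA'sub he, ?_⟩
            -- some endpoint is in R
            have heA : e ∈ A := hA'sub he
            induction e with
            | _ x y =>
              simp only [sym2min_mk] at hmlt2
              intro hmem
              rw [hAW', Finset.mem_filter] at hmem
              have hW : ∀ v ∈ s(x,y), v ∈ W := (Finset.mem_filter.mp heA).2
              rcases le_total (D x) (D y) with h | h
              · rw [min_eq_left h] at hmlt2
                have hxR : x ∈ R := Finset.mem_filter.mpr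
                  ⟨hW x (Sym2.mem_mk_left _ _), le_of_lt hmlt2⟩
                have := hmem.2 x (Sym2.mem_mk_left _ _)
                exact (Finset.mem_sdiff.mp this).2 hxR
              · rw [min_eq_right h] at hmlt2
                have hyR : y ∈ R := Finset.mem_filter.mpr
                  ⟨hW y (Sym2.mem_mk_right _ _), le_of_lt hmlt2⟩
                have := hmem.2 y (Sym2.mem_mk_right _ _)
                exact (Finset.mem_sdiff.mp this).2 hyR
          calc ∑ e ∈ A', (c e : ℝ) * phiR (sym2min D e).toReal ((l e : ℝ)) ρ
              = ∑ e ∈ A'.filter (· ∈ A \ AW'), (c e : ℝ) * phiR (sym2min D e).toReal ((l e : ℝ)) ρ :=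
                (Finset.sum_filter_of_ne hsupp).symm
            _ ≤ ∑ e ∈ A'.filter (· ∈ A \ AW'), ((c e : ℝ) * l e) := by
                refine Finset.sum_le_sum fun e he => ?_
                exact mul_le_mul_of_nonneg_left phiR_le (c e).coe_nonneg
            _ ≤ ∑ e ∈ A \ AW', ((c e : ℝ) * l e) := by
                refine Finset.sum_le_sum_of_subset_of_nonneg ?_
                  (fun e _ _ => mul_nonneg (c e).coe_nonneg (l e).coe_nonneg)
                intro e he
                exact (Finset.mem_filter.mp he).2
        have hsdiff : ∑ e ∈ A \ AW', ((c e : ℝ) * l e)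
            = ∑ e ∈ A, ((c e : ℝ) * l e) - ∑ e ∈ AW', ((c e : ℝ) * l e) := by
          have := Finset.sum_sdiff (f := fun e => ((c e : ℝ) * l e)) hAW'A
          linarith
        have hC_bound : ∑ e ∈ C, (c e : ℝ)
            ≤ lam * (V0 + ∑ e ∈ A, ((c e : ℝ) * l e) - ∑ e ∈ AW', ((c e : ℝ) * l e)) := by
          have h2 : ∑ e ∈ A', (c e : ℝ) * phiR (sym2min D e).toReal ((l e : ℝ)) ρ
              ≤ ∑ e ∈ A, ((c e : ℝ) * l e) - ∑ e ∈ AW', ((c e : ℝ) * l e) := by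
            rw [← hsdiff]; exact hvolrem
          have h3 := hcut
          nlinarith [hlam, h3, h2]
        have hcap2 := hcap''
        have hlen : ((s :: L).length : ℝ) = (L.length : ℝ) + 1 := by push_cast [List.length_cons]; ring
        calc ∑ e ∈ C ∪ E'', (c e : ℝ) ≤ ∑ e ∈ C, (c e : ℝ) + ∑ e ∈ E'', (c e : ℝ) := hsum_union
          _ ≤ lam * (V0 + ∑ e ∈ A, ((c e : ℝ) * l e) - ∑ e ∈ AW', ((c e : ℝ) * l e))
              + lam * (L.length * V0 + ∑ e ∈ AW', ((c e : ℝ) * l e)) := add_le_add hC_bound hcap2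
          _ = lam * (((L.length : ℝ) + 1) * V0 + ∑ e ∈ A, ((c e : ℝ) * l e)) := by ring
          _ = lam * (((s :: L).length : ℝ) * V0 + ∑ e ∈ A, ((c e : ℝ) * l e)) := by rw [hlen]
      · -- diameter
        intro R0 hR0 u hu v hv
        rcases List.mem_cons.mp hR0 with h | h
        · subst h
          have hu' : D u ≤ ENNReal.ofReal ρ := (Finset.mem_filter.mp hu).2
          have hv' : D v ≤ ENNReal.ofReal ρ := (Finset.mem_filter.mp hv).2
          have htri : wdist G l u v ≤ D u + D v := by
            rw [hD]
            calc wdist G l u v ≤ wdist G l u s + wdist G l s v := wdist_triangle l u s v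
              _ = wdist G l s u + wdist G l s v := by rw [wdist_comm l u s]
          have h2 : D u + D v ≤ ENNReal.ofReal ρ + ENNReal.ofReal ρ := add_le_add hu' hv'
          have h3 : ENNReal.ofReal ρ + ENNReal.ofReal ρ = ENNReal.ofReal (ρ + ρ) :=
            (ENNReal.ofReal_add hρ0 hρ0).symm
          have h4 : ENNReal.ofReal (ρ + ρ) < 1 := ENNReal.ofReal_lt_one.mpr (by linarith)
          calc wdist G l u v ≤ D u + D v := htri
            _ ≤ ENNReal.ofReal ρ + ENNReal.ofReal ρ := h2
            _ = ENNReal.ofReal (ρ + ρ) := h3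
            _ < 1 := h4
        · exact hdiam'' R0 h u hu v hv
      · -- coverage
        intro u hu hex
        obtain ⟨s', hs', hds'⟩ := hex
        rcases List.mem_cons.mp hs' with h | h
        · subst h
          have : D u ≤ ENNReal.ofReal ρ := by
            rw [hD]
            calc wdist G l s' u ≤ 1/4 := hds'
              _ = ENNReal.ofReal (1/4) := quarter_eq
              _ ≤ ENNReal.ofReal ρ := ENNReal.ofReal_le_ofReal hρ14
          exact ⟨R, List.mem_cons_self, Finset.mem_filter.mpr ⟨hu, this⟩⟩
        · by_cases huR : u ∈ R
          · exact ⟨R, List.mem_cons_self, huR⟩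
          · obtain ⟨R0, hR0, huR0⟩ := hcov'' u (Finset.mem_sdiff.mpr ⟨hu, huR⟩) ⟨s', h, hds'⟩
            exact ⟨R0, List.mem_cons_of_mem _ hR0, huR0⟩
      · -- separation
        intro R0 hR0 x hx y hy hadj hnotE
        have hnotC : s(x, y) ∉ C := fun hmem => hnotE (Finset.mem_union_left _ hmem)
        have hnotE'' : s(x, y) ∉ E'' := fun hmem => hnotE (Finset.mem_union_right _ hmem)
        have hedge : s(x, y) ∈ G.edgeFinset := SimpleGraph.mem_edgeFinset.mpr hadj
        rcases List.mem_cons.mp hR0 with h | h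
        · subst h
          -- x ∈ R, y ∈ W; if y ∉ R then the edge is in C, contradiction
          by_contra hyR
          have hxW : x ∈ W := (Finset.mem_filter.mp hx).1
          have hxD : D x ≤ ENNReal.ofReal ρ := (Finset.mem_filter.mp hx).2
          have hyD : ¬ D y ≤ ENNReal.ofReal ρ := fun hco => hyR (Finset.mem_filter.mpr ⟨hy, hco⟩)
          have hyD' : ENNReal.ofReal ρ < D y := not_le.mp hyD
          apply hnotC
          have heA : s(x, y) ∈ A := by
            rw [hA, Finset.mem_filter]
            refine ⟨hedge, fun v hv => ?_⟩
            rcases Sym2.mem_iff.mp hv with h | h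
            · subst h; exact hxW
            · subst h; exact hy
          have hmtop : sym2min D s(x, y) ≠ ⊤ := by
            simp only [sym2min_mk]
            exact ne_top_of_le_ne_top (by simp [ENNReal.ofReal_ne_top])
              (le_trans (min_le_left _ _) hxD)
          have heA' : s(x, y) ∈ A' := Finset.mem_filter.mpr ⟨heA, hmtop⟩
          rw [hC, Finset.mem_filter]
          refine ⟨heA', ?_, ?_⟩
          · exact ENNReal.toReal_le_of_le_ofReal hρ0
              (le_trans (by simp only [sym2min_mk]; exact min_le_left _ _) hxD)
          · have h1 : ENNReal.ofReal ρ < sym2max D s(x, y) :=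
              lt_of_lt_of_le hyD' (by simp only [sym2max_mk]; exact le_max_right _ _)
            have h2 : sym2max D s(x, y) ≠ ⊤ := hmax_ne_top _ heA'
            have := (ENNReal.toReal_lt_toReal (ENNReal.ofReal_ne_top) h2).mpr h1
            rwa [ENNReal.toReal_ofReal hρ0] at this
        · -- R0 is one of the recursive regions
          by_cases hyW' : y ∈ W \ R
          · exact hsep'' R0 h x hx y hyW' hadj hnotE''
          · -- then y ∈ R; x ∈ W \ R gives the edge is in C, contradiction
            have hyR : y ∈ R := by
              by_contra hco
              exact hyW' (Finset.mem_sdiff.mpr ⟨hy, hco⟩)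
            exfalso
            -- every region of Rs'' is inside W \ R
            have hxW' : x ∈ W \ R := hRsub'' R0 h hx
            have hxWW : x ∈ W := (Finset.mem_sdiff.mp hxW').1
            have hxR : x ∉ R := (Finset.mem_sdiff.mp hxW').2
            have hxD : ¬ D x ≤ ENNReal.ofReal ρ := fun hco => hxR (Finset.mem_filter.mpr ⟨hxWW, hco⟩)
            have hxD' : ENNReal.ofReal ρ < D x := not_le.mp hxD
            have hyD : D y ≤ ENNReal.ofReal ρ := (Finset.mem_filter.mp hyR).2
            apply hnotC
            have heA : s(x, y) ∈ A := by
              rw [hA, Finset.mem_filter]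
              refine ⟨hedge, fun v hv => ?_⟩
              rcases Sym2.mem_iff.mp hv with h' | h'
              · subst h'; exact hxWW
              · subst h'; exact hy
            have hmtop : sym2min D s(x, y) ≠ ⊤ := by
              simp only [sym2min_mk]
              exact ne_top_of_le_ne_top (by simp [ENNReal.ofReal_ne_top])
                (le_trans (min_le_right _ _) hyD)
            have heA' : s(x, y) ∈ A' := Finset.mem_filter.mpr ⟨heA, hmtop⟩
            rw [hC, Finset.mem_filter]
            refine ⟨heA', ?_, ?_⟩
            · exact ENNReal.toReal_le_of_le_ofReal hρ0
                (le_trans (by simp only [sym2min_mk]; exact min_le_right _ _) hyD)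
            · have h1 : ENNReal.ofReal ρ < sym2max D s(x, y) :=
                lt_of_lt_of_le hxD' (by simp only [sym2max_mk]; exact le_max_left _ _)
              have h2 : sym2max D s(x, y) ≠ ⊤ := hmax_ne_top _ heA'
              have := (ENNReal.toReal_lt_toReal (ENNReal.ofReal_ne_top) h2).mpr h1
              rwa [ENNReal.toReal_ofReal hρ0] at this

/-- Covering decomposition lemma. If `S ⊆ V` with `|S| ≤ r` satisfies
`d(u,S) ≤ 1/4` for all `u`, then there is a set `E'` of edges of capacity at most
`8·ln(r+1)·F` (where `F = Σ_e c(e)·l(e)`) whose removal leaves only components of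
`d_G`-diameter strictly less than `1`. -/
theorem covering_decomposition {V : Type*} [Fintype V] [DecidableEq V]
    (G : SimpleGraph V) [DecidableRel G.Adj]
    (c l : Sym2 V → NNReal) (r : ℕ) (S : Finset V)
    (hScard : S.card ≤ r)
    (hnear : ∀ u : V, ∃ s ∈ S, wdist G l s u ≤ 1/4) :
    ∃ E' ⊆ G.edgeFinset,
      (∑ e ∈ E', (c e : ℝ)) ≤ 8 * Real.log (r + 1) * ∑ e ∈ G.edgeFinset, ((c e : ℝ) * l e) ∧
      ∀ u v : V, (G.deleteEdges ↑E').Reachable u v → wdist G l u v < 1 := by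
  classical
  set F : ℝ := ∑ e ∈ G.edgeFinset, ((c e : ℝ) * l e) with hFdef
  have hF0 : 0 ≤ F := Finset.sum_nonneg fun e _ => mul_nonneg (c e).coe_nonneg (l e).coe_nonneg
  rcases eq_or_lt_of_le hF0 with hF | hF
  · -- degenerate case F = 0 : delete all edges of positive length
    refine ⟨G.edgeFinset.filter (fun e => l e ≠ 0), Finset.filter_subset _ _, ?_, ?_⟩
    · have hz : ∑ e ∈ G.edgeFinset.filter (fun e => l e ≠ 0), (c e : ℝ) = 0 := by
        apply Finset.sum_eq_zero
        intro e he
        rw [Finset.mem_filter] at he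
        have hterm : ((c e : ℝ) * l e) = 0 := by
          have := (Finset.sum_eq_zero_iff_of_nonneg
            (fun e _ => mul_nonneg (c e).coe_nonneg (l e).coe_nonneg)).mp hF.symm
          exact this e he.1
        have hl : (l e : ℝ) ≠ 0 := by
          simpa [NNReal.coe_eq_zero] using he.2
        simpa [NNReal.coe_eq_zero] using (mul_eq_zero.mp hterm).resolve_right hl
      rw [hz, ← hF]
      simp
    · intro u v huv
      obtain ⟨p⟩ := huv
      have hpe : ∀ e ∈ p.edges, e ∈ G.edgeSet := by
        intro e he
        have := p.edges_subset_edgeSet he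
        rw [SimpleGraph.edgeSet_deleteEdges] at this
        exact this.1
      have hlen : walkLen l (p.transfer G hpe) = 0 := by
        rw [walkLen]
        apply List.sum_eq_zero
        intro x hx
        rw [List.mem_map] at hx
        obtain ⟨e, he, rfl⟩ := hx
        rw [SimpleGraph.Walk.edges_transfer] at he
        have h1 := p.edges_subset_edgeSet he
        rw [SimpleGraph.edgeSet_deleteEdges] at h1
        have h2 : e ∉ G.edgeFinset.filter (fun e => l e ≠ 0) := by
          intro hco
          exact h1.2 (Finset.mem_coe.mpr hco)
        have h3 : l e = 0 := by
          by_contra hco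
          exact h2 (Finset.mem_filter.mpr ⟨SimpleGraph.mem_edgeFinset.mpr h1.1, hco⟩)
        simp [h3]
      calc wdist G l u v ≤ walkLen l (p.transfer G hpe) := wdist_le l _
        _ = 0 := hlen
        _ < 1 := by norm_num
  · -- main case F > 0
    set k : ℕ := S.card with hk
    have hkpos : 0 < k := by
      -- V is nonempty since there is an edge
      have hne : G.edgeFinset.Nonempty := by
        by_contra hco
        rw [Finset.not_nonempty_iff_eq_empty] at hco
        rw [hFdef, hco, Finset.sum_empty] at hF
        exact lt_irrefl _ hF
      obtain ⟨e, he⟩ := hne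
      induction e with
      | _ x y =>
        obtain ⟨s, hs, _⟩ := hnear x
        exact Finset.card_pos.mpr ⟨s, hs⟩
    have hkR : (1:ℝ) ≤ k := by exact_mod_cast hkpos
    set lam : ℝ := 4 * Real.log (k + 1) with hlam'
    have hlogpos : 0 < Real.log (k + 1) := Real.log_pos (by linarith)
    have hlampos : 0 < lam := by rw [hlam']; linarith
    set V0 : ℝ := F / k with hV0'
    have hV0pos : 0 < V0 := div_pos hF (by linarith)
    have hexp : Real.exp (lam / 4) = k + 1 := by
      rw [hlam']
      have : (4:ℝ) * Real.log (k + 1) / 4 = Real.log (k + 1) := by ring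
      rw [this, Real.exp_log (by linarith)]
    have hFle : ∑ e ∈ G.edgeFinset, ((c e : ℝ) * l e) ≤ (Real.exp (lam / 4) - 1) * V0 := by
      rw [hexp, hV0']
      have : ((k:ℝ) + 1 - 1) * (F / k) = F := by field_simp; ring
      rw [this, ← hFdef]
    obtain ⟨E', Rs, hEsub, hRsub, hcap, hdiam, hcov, hsep⟩ :=
      aux G c l V0 lam hV0pos hlampos hFle S.toList Finset.univ
    refine ⟨E', hEsub, ?_, ?_⟩
    · -- capacity bound
      have hfilter : G.edgeFinset.filter (fun e => ∀ v ∈ e, v ∈ (Finset.univ : Finset V))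
          = G.edgeFinset := Finset.filter_true_of_mem (fun e _ => fun v _ => Finset.mem_univ v)
      rw [hfilter] at hcap
      have hlenL : (S.toList.length : ℝ) = (k : ℝ) := by
        rw [Finset.length_toList, hk]
      rw [hlenL] at hcap
      have heq1 : lam * ((k:ℝ) * V0 + F) = 8 * Real.log (k + 1) * F := by
        rw [hlam', hV0']
        field_simp
        ring
      have hloglog : Real.log ((k:ℝ) + 1) ≤ Real.log ((r:ℝ) + 1) := by
        apply Real.log_le_log (by linarith)
        have : (k:ℝ) ≤ (r:ℝ) := by exact_mod_cast le_trans (le_of_eq hk.symm) hScard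
        linarith
      calc ∑ e ∈ E', (c e : ℝ) ≤ lam * ((k:ℝ) * V0 + F) := by rw [← hFdef] at hcap; exact hcap
        _ = 8 * Real.log (k + 1) * F := heq1
        _ ≤ 8 * Real.log (r + 1) * F := by
            apply mul_le_mul_of_nonneg_right _ hF0
            linarith
    · -- components have small diameter
      intro u v huv
      obtain ⟨p⟩ := huv
      obtain ⟨s, hs, hds⟩ := hnear u
      obtain ⟨R, hR, huR⟩ := hcov u (Finset.mem_univ u) ⟨s, Finset.mem_toList.mpr hs, hds⟩
      have hclose : ∀ (a b : V) (q : (G.deleteEdges ↑E').Walk a b), a ∈ R → b ∈ R := by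
        intro a b q
        induction q with
        | nil => exact id
        | cons hadj q ihq =>
            intro ha
            apply ihq
            rw [SimpleGraph.deleteEdges_adj] at hadj
            exact hsep R hR _ ha _ (Finset.mem_univ _) hadj.1 (by simpa using hadj.2)
      exact hdiam R hR u huR v (hclose u v p huR)
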